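/- Everywhere on [0, log 2] × [0, log 2] where the partial derivative exists, |∂f₂/∂x| ≤ 1, and the inequality is strict, |∂f₂/∂x| < 1, at every point (x,y) lying in the interior (0, log 2) × (0, log 2). By symmetry the same holds for ∂f₂/∂y. -/

import Mathlib

noncomputable def binEnt (p : ℝ) : ℝ := -p * Real.log p - (1 - p) * Real.log (1 - p)

noncomputable def binEntInv (x : ℝ) : ℝ :=
  sInf {p : ℝ | p ∈ Set.Icc (0 : ℝ) (1 / 2) ∧ binEnt p = x}

noncomputable def starOp (p q : ℝ) : ℝ := p * (1 - q) + q * (1 - p)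

noncomputable def f₂ (x y : ℝ) : ℝ := binEnt (starOp (binEntInv x) (binEntInv y))

/-- Shannon entropy (natural log) of a discrete random variable `X` on `(Ω, μ)`. -/
noncomputable def entropy {Ω S : Type*} [MeasurableSpace Ω] (μ : MeasureTheory.Measure Ω)
    (X : Ω → S) : ℝ :=
  ∑' s : S, Real.negMulLog ((μ (X ⁻¹' {s})).toReal)

/-- Conditional Shannon entropy `H(X | U) = H(X, U) - H(U)`. -/
noncomputable def condEntropy {Ω S T : Type*} [MeasurableSpace Ω] (μ : MeasureTheory.Measure Ω)
    (X : Ω → S) (U : Ω → T) : ℝ :=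
  entropy μ (fun ω => (X ω, U ω)) - entropy μ U

/-- Independence of two discrete random variables. -/
def IndepRV {Ω S T : Type*} [MeasurableSpace Ω] (μ : MeasureTheory.Measure Ω)
    (X : Ω → S) (Y : Ω → T) : Prop :=
  ∀ (a : S) (b : T), μ (X ⁻¹' {a} ∩ Y ⁻¹' {b}) = μ (X ⁻¹' {a}) * μ (Y ⁻¹' {b})

/-- Mutual independence of a finite family of discrete random variables. -/
def iIndepRV {Ω G ι : Type*} [Fintype ι] [MeasurableSpace Ω] (μ : MeasureTheory.Measure Ω)
    (X : ι → Ω → G) : Prop :=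
  ∀ a : ι → G, μ (⋂ i, X i ⁻¹' {a i}) = ∏ i, μ (X i ⁻¹' {a i})

/-- `fG G x y` : the minimum entropy `H(X+Y)` over independent `G`-valued random variables
`X, Y` with `H(X) = x` and `H(Y) = y`. -/
noncomputable def fG (G : Type) [AddCommGroup G] (x y : ℝ) : ℝ :=
  sInf { z : ℝ | ∃ (Ω : Type) (_ : MeasurableSpace Ω) (μ : MeasureTheory.Measure Ω),
    MeasureTheory.IsProbabilityMeasure μ ∧ ∃ X Y : Ω → G, IndepRV μ X Y ∧
      entropy μ X = x ∧ entropy μ Y = y ∧ entropy μ (fun ω => X ω + Y ω) = z }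

/-- `fGk G k x` : the minimum entropy `H(X₁ + ⋯ + X_k)` over `k` mutually independent
`G`-valued random variables with `H(Xᵢ) = xᵢ`. -/
noncomputable def fGk (G : Type) [AddCommGroup G] (k : ℕ) (x : Fin k → ℝ) : ℝ :=
  sInf { z : ℝ | ∃ (Ω : Type) (_ : MeasurableSpace Ω) (μ : MeasureTheory.Measure Ω),
    MeasureTheory.IsProbabilityMeasure μ ∧ ∃ X : Fin k → Ω → G, iIndepRV μ X ∧
      (∀ i, entropy μ (X i) = x i) ∧ entropy μ (fun ω => ∑ i, X i ω) = z }

/-- Iterated application `fG G x₁ (fG G x₂ (… (fG G x_{r-1} x_r)…))`. -/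
noncomputable def iterFG (G : Type) [AddCommGroup G] : List ℝ → ℝ
  | [] => 0
  | [a] => a
  | a :: b :: rest => fG G a (iterFG G (b :: rest))

section Aux
open Real Set Filter Topology

lemma binEnt_eq (p : ℝ) : binEnt p = negMulLog p + negMulLog (1 - p) := by
  simp [binEnt, negMulLog]; ring

lemma binEnt_continuous : Continuous binEnt := by
  simp only [funext binEnt_eq]
  exact continuous_negMulLog.add (continuous_negMulLog.comp (continuous_const.sub continuous_id))

lemma hasDerivAt_binEnt {p : ℝ} (h0 : 0 < p) (h1 : p < 1) :
    HasDerivAt binEnt (Real.log (1 - p) - Real.log p) p := by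
  have h1' : (1 : ℝ) - p ≠ 0 := by linarith
  have d1 := hasDerivAt_negMulLog h0.ne'
  have d2 : HasDerivAt (fun q : ℝ => negMulLog (1 - q)) ((-log (1 - p) - 1) * (0 - 1)) p := by
    exact HasDerivAt.comp p (hasDerivAt_negMulLog h1') ((hasDerivAt_const p (1:ℝ)).sub (hasDerivAt_id p))
  have : HasDerivAt (fun x => negMulLog x + negMulLog (1 - x)) (-log p - 1 + (-log (1 - p) - 1) * (0 - 1)) p := (d1.add d2)
  simp only [funext binEnt_eq]
  convert this using 1
  ring

lemma binEnt_zero : binEnt 0 = 0 := by simp [binEnt]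

lemma binEnt_half : binEnt (1/2) = Real.log 2 := by
  have : Real.log (1/2) = - Real.log 2 := by
    rw [one_div, Real.log_inv]
  norm_num [binEnt, this]
  ring

lemma binEnt_strictMonoOn : StrictMonoOn binEnt (Icc 0 (1/2)) := by
  apply strictMonoOn_of_deriv_pos (convex_Icc _ _) binEnt_continuous.continuousOn
  intro x hx
  rw [interior_Icc] at hx
  rw [(hasDerivAt_binEnt hx.1 (by linarith [hx.2])).deriv]
  have : x < 1 - x := by linarith [hx.2]
  have := Real.log_lt_log hx.1 this
  linarith

lemma binEnt_nonneg {p : ℝ} (h : p ∈ Icc (0:ℝ) 1) : 0 ≤ binEnt p := by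
  rw [binEnt_eq]
  have h1 : 0 ≤ negMulLog p := by
    rcases eq_or_lt_of_le h.1 with h'|h'
    · simp [← h']
    · exact (negMulLog_nonneg h'.le h.2)
  have h2 : 0 ≤ negMulLog (1 - p) := by
    rcases eq_or_lt_of_le h.2 with h'|h'
    · simp [h']
    · exact negMulLog_nonneg (by linarith) (by linarith [h.1])
  linarith

lemma binEnt_le_log_two {p : ℝ} (h : p ∈ Icc (0:ℝ) (1/2)) : binEnt p ≤ Real.log 2 := by
  rcases eq_or_lt_of_le h.2 with h'|h'
  · rw [h', binEnt_half]
  · rw [← binEnt_half]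
    exact (binEnt_strictMonoOn h (by constructor <;> norm_num) h').le

lemma binEntInv_of_binEnt {p : ℝ} (hp : p ∈ Icc (0:ℝ) (1/2)) : binEntInv (binEnt p) = p := by
  have : {q : ℝ | q ∈ Set.Icc (0 : ℝ) (1 / 2) ∧ binEnt q = binEnt p} = {p} := by
    ext q
    simp only [mem_setOf_eq, mem_singleton_iff]
    constructor
    · rintro ⟨hq, he⟩; exact binEnt_strictMonoOn.injOn hq hp he
    · rintro rfl; exact ⟨hp, rfl⟩
  rw [binEntInv, this, csInf_singleton]

lemma binEntInv_spec {x : ℝ} (hx : x ∈ Icc 0 (Real.log 2)) :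
    binEntInv x ∈ Icc (0:ℝ) (1/2) ∧ binEnt (binEntInv x) = x := by
  have h2 : (0:ℝ) ≤ 1/2 := by norm_num
  have := intermediate_value_Icc h2 binEnt_continuous.continuousOn
  rw [binEnt_zero, binEnt_half] at this
  obtain ⟨p, hp, hpe⟩ := this hx
  rw [← hpe, binEntInv_of_binEnt hp]
  exact ⟨hp, rfl⟩

lemma binEntInv_zero : binEntInv 0 = 0 := by
  conv_lhs => rw [← binEnt_zero]
  rw [binEntInv_of_binEnt (by constructor <;> norm_num)]

lemma binEntInv_log_two : binEntInv (Real.log 2) = 1/2 := by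
  rw [← binEnt_half, binEntInv_of_binEnt (by constructor <;> norm_num)]

lemma binEntInv_of_neg {x : ℝ} (hx : x < 0) : binEntInv x = 0 := by
  have : {p : ℝ | p ∈ Set.Icc (0 : ℝ) (1 / 2) ∧ binEnt p = x} = ∅ := by
    ext p; simp only [mem_setOf_eq, mem_empty_iff_false, iff_false, not_and]
    intro hp he
    have := binEnt_nonneg (⟨hp.1, by linarith [hp.2]⟩ : p ∈ Icc (0:ℝ) 1)
    linarith [he ▸ this]
  rw [binEntInv, this, Real.sInf_empty]

lemma binEntInv_of_gt {x : ℝ} (hx : Real.log 2 < x) : binEntInv x = 0 := by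
  have : {p : ℝ | p ∈ Set.Icc (0 : ℝ) (1 / 2) ∧ binEnt p = x} = ∅ := by
    ext p; simp only [mem_setOf_eq, mem_empty_iff_false, iff_false, not_and]
    intro hp he
    have := binEnt_le_log_two hp
    linarith [he ▸ this]
  rw [binEntInv, this, Real.sInf_empty]

lemma binEntInv_mem_Ioo {x : ℝ} (hx : x ∈ Ioo 0 (Real.log 2)) :
    binEntInv x ∈ Ioo (0:ℝ) (1/2) := by
  obtain ⟨hmem, he⟩ := binEntInv_spec (Ioo_subset_Icc_self hx)
  constructor
  · rcases eq_or_lt_of_le hmem.1 with h|h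
    · exfalso; rw [← h, binEnt_zero] at he; rw [← he] at hx; exact lt_irrefl _ hx.1
    · exact h
  · rcases eq_or_lt_of_le hmem.2 with h|h
    · exfalso; rw [h, binEnt_half] at he; rw [← he] at hx; exact lt_irrefl _ hx.2
    · exact h

lemma binEntInv_continuousAt {a : ℝ} (ha : a ∈ Ioo 0 (Real.log 2)) :
    ContinuousAt binEntInv a := by
  rw [Metric.continuousAt_iff]
  intro ε hε
  set p := binEntInv a with hp
  have hpI := binEntInv_mem_Ioo ha
  have hpe := (binEntInv_spec (Ioo_subset_Icc_self ha)).2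
  set ε' : ℝ := min (ε/2) (min (p/2) ((1/2 - p)/2)) with hε'
  have hε'pos : 0 < ε' := by
    apply lt_min (by linarith)
    apply lt_min (by linarith [hpI.1]) (by linarith [hpI.2])
  have hε'p : ε' ≤ p/2 := le_trans (min_le_right _ _) (min_le_left _ _)
  have hε'p2 : ε' ≤ (1/2 - p)/2 := le_trans (min_le_right _ _) (min_le_right _ _)
  have hε'ε : ε' ≤ ε/2 := min_le_left _ _
  have h1I : p - ε' ∈ Icc (0:ℝ) (1/2) := ⟨by linarith [hpI.1], by linarith [hpI.2]⟩
  have h2I : p + ε' ∈ Icc (0:ℝ) (1/2) := ⟨by linarith [hpI.1], by linarith⟩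
  have hpIc : p ∈ Icc (0:ℝ) (1/2) := ⟨hpI.1.le, hpI.2.le⟩
  have hb1 : binEnt (p - ε') < a := by
    rw [← hpe]; exact binEnt_strictMonoOn h1I hpIc (by linarith)
  have hb2 : a < binEnt (p + ε') := by
    rw [← hpe]; exact binEnt_strictMonoOn hpIc h2I (by linarith)
  refine ⟨min (a - binEnt (p - ε')) (binEnt (p + ε') - a), lt_min (by linarith) (by linarith), ?_⟩
  intro x hx
  rw [Real.dist_eq] at hx
  have habs := abs_lt.mp hx
  have hm1 := min_le_left (a - binEnt (p - ε')) (binEnt (p + ε') - a)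
  have hm2 := min_le_right (a - binEnt (p - ε')) (binEnt (p + ε') - a)
  have hx1 : binEnt (p - ε') < x := by linarith [habs.1]
  have hx2 : x < binEnt (p + ε') := by linarith [habs.2]
  have hxI : x ∈ Icc (0:ℝ) (Real.log 2) := by
    constructor
    · have := binEnt_nonneg (⟨h1I.1, by linarith [h1I.2]⟩ : p - ε' ∈ Icc (0:ℝ) 1)
      linarith
    · have := binEnt_le_log_two h2I
      linarith
  obtain ⟨hqI, hqe⟩ := binEntInv_spec hxI
  set q := binEntInv x
  have hq1 : p - ε' < q := by
    by_contra h
    push_neg at h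
    have := binEnt_strictMonoOn.monotoneOn hqI h1I h
    rw [hqe] at this; linarith
  have hq2 : q < p + ε' := by
    by_contra h
    push_neg at h
    have := binEnt_strictMonoOn.monotoneOn h2I hqI h
    rw [hqe] at this; linarith
  rw [Real.dist_eq, abs_lt]
  constructor <;> [skip; skip] <;> simp only [hp] <;> linarith

lemma hasDerivAt_binEntInv {a : ℝ} (ha : a ∈ Ioo 0 (Real.log 2)) :
    HasDerivAt binEntInv (Real.log (1 - binEntInv a) - Real.log (binEntInv a))⁻¹ a := by
  set p := binEntInv a
  have hpI := binEntInv_mem_Ioo ha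
  have hLpos : 0 < Real.log (1 - p) - Real.log p := by
    have := Real.log_lt_log hpI.1 (by linarith [hpI.2] : p < 1 - p)
    linarith
  apply HasDerivAt.of_local_left_inverse (binEntInv_continuousAt ha)
    (hasDerivAt_binEnt hpI.1 (by linarith [hpI.2])) hLpos.ne'
  have : Ioo 0 (Real.log 2) ∈ 𝓝 a := isOpen_Ioo.mem_nhds ha
  filter_upwards [this] with x hx
  exact (binEntInv_spec (Ioo_subset_Icc_self hx)).2

/-- key derivative computation -/
lemma f₂_hasDerivAt {x y : ℝ} (hx : x ∈ Ioo 0 (Real.log 2)) (hy : y ∈ Icc 0 (Real.log 2)) :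
    HasDerivAt (fun t => f₂ t y)
      ((Real.log (1 - starOp (binEntInv x) (binEntInv y)) - Real.log (starOp (binEntInv x) (binEntInv y)))
        * ((1 - 2 * binEntInv y) * (Real.log (1 - binEntInv x) - Real.log (binEntInv x))⁻¹)) x := by
  set p := binEntInv x with hp
  set q := binEntInv y with hq
  set r := starOp p q with hr
  have hpI := binEntInv_mem_Ioo hx
  have hqI := (binEntInv_spec hy).1
  have hr0 : 0 < r := by
    have : r = p * (1 - q) + q * (1 - p) := rfl
    nlinarith [hpI.1, hpI.2, hqI.1, hqI.2]
  have hr1 : r < 1 := by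
    have h12 : (1:ℝ) - 2*r = (1 - 2*p) * (1 - 2*q) := by simp only [hr, starOp]; ring
    nlinarith [hpI.1, hpI.2, hqI.1, hqI.2]
  -- inner function
  have hinner : HasDerivAt (fun t => starOp (binEntInv t) q)
      ((1 - 2*q) * (Real.log (1 - p) - Real.log p)⁻¹) x := by
    have h1 : (fun t => starOp (binEntInv t) q) = fun t => (1 - 2*q) * binEntInv t + q := by
      funext t; simp only [starOp]; ring
    rw [h1]
    simpa using ((hasDerivAt_binEntInv hx).const_mul (1 - 2*q)).add_const q
  have houter := hasDerivAt_binEnt hr0 hr1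
  exact houter.comp x hinner

lemma deriv_bounds {x y : ℝ} (hx : x ∈ Ioo 0 (Real.log 2)) (hy : y ∈ Icc 0 (Real.log 2)) :
    0 ≤ (Real.log (1 - starOp (binEntInv x) (binEntInv y)) - Real.log (starOp (binEntInv x) (binEntInv y)))
        * ((1 - 2 * binEntInv y) * (Real.log (1 - binEntInv x) - Real.log (binEntInv x))⁻¹) ∧
    (Real.log (1 - starOp (binEntInv x) (binEntInv y)) - Real.log (starOp (binEntInv x) (binEntInv y)))
        * ((1 - 2 * binEntInv y) * (Real.log (1 - binEntInv x) - Real.log (binEntInv x))⁻¹) ≤ 1 ∧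
    (0 < y → (Real.log (1 - starOp (binEntInv x) (binEntInv y)) - Real.log (starOp (binEntInv x) (binEntInv y)))
        * ((1 - 2 * binEntInv y) * (Real.log (1 - binEntInv x) - Real.log (binEntInv x))⁻¹) < 1) := by
  set p := binEntInv x with hp
  set q := binEntInv y with hq
  set r := starOp p q with hr
  have hpI := binEntInv_mem_Ioo hx
  have hqI := (binEntInv_spec hy).1
  set Lp := Real.log (1 - p) - Real.log p with hLp
  set Lr := Real.log (1 - r) - Real.log r with hLr
  have hLp_pos : 0 < Lp := by
    have := Real.log_lt_log hpI.1 (by linarith [hpI.2] : p < 1 - p)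
    linarith
  have hrp : p ≤ r := by
    have : r - p = q * (1 - 2*p) := by simp only [hr, starOp]; ring
    nlinarith [hqI.1, hpI.2]
  have hr12 : r ≤ 1/2 := by
    have h12 : (1:ℝ) - 2*r = (1 - 2*p) * (1 - 2*q) := by simp only [hr, starOp]; ring
    nlinarith [hpI.2, hqI.2]
  have hr0 : 0 < r := lt_of_lt_of_le hpI.1 hrp
  have hLr_nonneg : 0 ≤ Lr := by
    rcases eq_or_lt_of_le hr12 with h|h
    · rw [hLr, h]; norm_num
    · have := Real.log_lt_log hr0 (by linarith : r < 1 - r)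
      linarith
  have hLrLp : Lr ≤ Lp := by
    rcases eq_or_lt_of_le hrp with h|h
    · rw [hLr, ← h]
    · have h1 := Real.log_lt_log hpI.1 h
      have h2 : Real.log (1 - r) ≤ Real.log (1 - p) := by
        apply Real.log_le_log (by linarith) (by linarith)
      simp only [hLr, hLp]; linarith
  have hq2 : 0 ≤ 1 - 2*q := by linarith [hqI.2]
  have hinv_pos : 0 < Lp⁻¹ := inv_pos.mpr hLp_pos
  refine ⟨by positivity, ?_, ?_⟩
  · rw [mul_comm (1 - 2*q), ← mul_assoc]
    calc Lr * Lp⁻¹ * (1 - 2*q) ≤ Lr * Lp⁻¹ * 1 := by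
          apply mul_le_mul_of_nonneg_left (by linarith [hqI.1]) (by positivity)
      _ ≤ 1 := by
          rw [mul_one]
          calc Lr * Lp⁻¹ ≤ Lp * Lp⁻¹ := by
                apply mul_le_mul_of_nonneg_right hLrLp hinv_pos.le
            _ = 1 := mul_inv_cancel₀ hLp_pos.ne'
  · intro hy0
    have hqpos : 0 < q := by
      rcases eq_or_lt_of_le hy.2 with h|h
      · have : q = 1/2 := by rw [hq, h, binEntInv_log_two]
        rw [this]; norm_num
      · exact (binEntInv_mem_Ioo ⟨hy0, h⟩).1
    have h1 : Lr * Lp⁻¹ ≤ 1 := by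
      calc Lr * Lp⁻¹ ≤ Lp * Lp⁻¹ := mul_le_mul_of_nonneg_right hLrLp hinv_pos.le
        _ = 1 := mul_inv_cancel₀ hLp_pos.ne'
    calc Lr * ((1 - 2*q) * Lp⁻¹) = (Lr * Lp⁻¹) * (1 - 2*q) := by ring
      _ ≤ 1 * (1 - 2*q) := mul_le_mul_of_nonneg_right h1 hq2
      _ = 1 - 2*q := one_mul _
      _ < 1 := by linarith

lemma starOp_comm (p q : ℝ) : starOp p q = starOp q p := by simp [starOp]; ring

lemma f₂_comm (x y : ℝ) : f₂ x y = f₂ y x := by rw [f₂, f₂, starOp_comm]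

lemma f₂_of_le_zero {t : ℝ} (ht : t ≤ 0) (y : ℝ) : f₂ t y = binEnt (binEntInv y) := by
  have h : binEntInv t = 0 := by
    rcases eq_or_lt_of_le ht with h|h
    · rw [h, binEntInv_zero]
    · exact binEntInv_of_neg h
  rw [f₂, h]
  congr 1
  simp [starOp]

lemma f₂_log_two_right (t : ℝ) : f₂ t (Real.log 2) = Real.log 2 := by
  rw [f₂, binEntInv_log_two]
  have : starOp (binEntInv t) (1/2) = 1/2 := by simp [starOp]; ring
  rw [this, binEnt_half]

lemma f₂_of_gt {t : ℝ} (ht : Real.log 2 < t) (y : ℝ) : f₂ t y = binEnt (binEntInv y) := by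
  rw [f₂, binEntInv_of_gt ht]
  congr 1
  simp [starOp]

/-- derivative is zero if the function is constant to the left -/
lemma deriv_zero_of_const_left {f : ℝ → ℝ} {d x₀ c : ℝ} (hf : HasDerivAt f d x₀)
    (hc : ∀ t ≤ x₀, f t = c) : d = 0 := by
  have h1 : HasDerivWithinAt f d (Iic x₀) x₀ := hf.hasDerivWithinAt
  have h2 : HasDerivWithinAt f 0 (Iic x₀) x₀ := by
    apply (hasDerivWithinAt_const x₀ (Iic x₀) c).congr
    · intro t ht; exact hc t ht
    · exact hc x₀ le_rfl
  exact (uniqueDiffOn_Iic x₀ x₀ self_mem_Iic).eq_deriv _ h1 h2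

/-- no derivative at log 2 when y < log 2 -/
lemma not_hasDerivAt_at_log_two {y d : ℝ} (hy : y ∈ Ico 0 (Real.log 2)) :
    ¬ HasDerivAt (fun t => f₂ t y) d (Real.log 2) := by
  intro h
  have hcont := h.continuousAt
  have hq : binEnt (binEntInv y) < Real.log 2 := by
    have hqI := (binEntInv_spec ⟨hy.1, hy.2.le⟩).1
    have hqe := (binEntInv_spec ⟨hy.1, hy.2.le⟩).2
    rcases eq_or_lt_of_le hqI.2 with h'|h'
    · exfalso; rw [h', binEnt_half] at hqe; linarith [hy.2, hqe]
    · rw [← binEnt_half]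
      exact binEnt_strictMonoOn hqI (by constructor <;> norm_num) h'
  have hval : f₂ (Real.log 2) y = Real.log 2 := by
    rw [f₂, binEntInv_log_two]
    have : starOp (1/2) (binEntInv y) = 1/2 := by simp [starOp]; ring
    rw [this, binEnt_half]
  -- limit from the right is binEnt (binEntInv y)
  have h1 : Tendsto (fun t => f₂ t y) (𝓝[>] (Real.log 2)) (𝓝 (Real.log 2)) := by
    have := (hcont.continuousWithinAt (s := Ioi (Real.log 2))).tendsto
    rwa [hval] at this
  have h2 : Tendsto (fun t => f₂ t y) (𝓝[>] (Real.log 2)) (𝓝 (binEnt (binEntInv y))) := by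
    apply Tendsto.congr' _ tendsto_const_nhds
    filter_upwards [self_mem_nhdsWithin] with t ht
    exact (f₂_of_gt ht y).symm
  exact absurd (tendsto_nhds_unique h1 h2) (by linarith)

end Aux

/-- Wherever the partial derivatives of `f₂` exist on `[0, log 2]²` they have absolute
value at most `1`, and strictly less than `1` in the interior `(0, log 2)²`.
By symmetry the same statement holds for both partial derivatives. -/
theorem abs_partial_deriv_le_one :
    (∀ x ∈ Set.Icc (0 : ℝ) (Real.log 2), ∀ y ∈ Set.Icc (0 : ℝ) (Real.log 2),
      (∀ d : ℝ, HasDerivAt (fun t => f₂ t y) d x → |d| ≤ 1) ∧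
      (∀ d : ℝ, HasDerivAt (fun t => f₂ x t) d y → |d| ≤ 1)) ∧
    (∀ x ∈ Set.Ioo (0 : ℝ) (Real.log 2), ∀ y ∈ Set.Ioo (0 : ℝ) (Real.log 2),
      |deriv (fun t => f₂ t y) x| < 1 ∧ |deriv (fun t => f₂ x t) y| < 1) := by
  open Real Set Filter Topology in
  have key : ∀ x ∈ Set.Icc (0:ℝ) (Real.log 2), ∀ y ∈ Set.Icc (0:ℝ) (Real.log 2),
      ∀ d : ℝ, HasDerivAt (fun t => f₂ t y) d x → |d| ≤ 1 := by
    intro x hx y hy d hd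
    rcases eq_or_lt_of_le hy.2 with hylt|hylt
    · -- y = log 2 : constant
      have hc : (fun t => f₂ t y) = fun _ => Real.log 2 := by
        funext t; rw [hylt, f₂_log_two_right]
      rw [hc] at hd
      have := hd.unique (hasDerivAt_const x (Real.log 2))
      rw [this]; norm_num
    · have hy' : y ∈ Set.Ico (0:ℝ) (Real.log 2) := ⟨hy.1, hylt⟩
      rcases eq_or_lt_of_le hx.1 with hx0|hx0
      · -- x = 0
        have : d = 0 := by
          apply deriv_zero_of_const_left hd (c := binEnt (binEntInv y))
          intro t ht
          rw [← hx0] at ht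
          exact f₂_of_le_zero ht y
        rw [this]; norm_num
      · rcases eq_or_lt_of_le hx.2 with hx2|hx2
        · exact absurd (hx2 ▸ hd) (not_hasDerivAt_at_log_two hy')
        · have hxI : x ∈ Set.Ioo (0:ℝ) (Real.log 2) := ⟨hx0, hx2⟩
          have h1 := f₂_hasDerivAt hxI hy
          have h2 := deriv_bounds hxI hy
          rw [hd.unique h1, abs_le]
          exact ⟨by linarith [h2.1], h2.2.1⟩
  constructor
  · intro x hx y hy
    refine ⟨key x hx y hy, ?_⟩
    intro d hd
    have hc : (fun t => f₂ x t) = fun t => f₂ t x := funext fun t => f₂_comm x t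
    rw [hc] at hd
    exact key y hy x hx d hd
  · intro x hx y hy
    have main : ∀ x ∈ Set.Ioo (0:ℝ) (Real.log 2), ∀ y ∈ Set.Ioo (0:ℝ) (Real.log 2),
        |deriv (fun t => f₂ t y) x| < 1 := by
      intro x hx y hy
      have h1 := f₂_hasDerivAt hx (Set.Ioo_subset_Icc_self hy)
      have h2 := deriv_bounds hx (Set.Ioo_subset_Icc_self hy)
      rw [h1.deriv, abs_lt]
      exact ⟨by linarith [h2.1], h2.2.2 hy.1⟩
    refine ⟨main x hx y hy, ?_⟩
    have hc : (fun t => f₂ x t) = fun t => f₂ t x := funext fun t => f₂_comm x t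
    rw [hc]
    exact main y hy x hx
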